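/- arXiv:2210.10345 — 2 statements merged into one kernel-verified Lean document; each statement's English description precedes it below -/
import Mathlib

section
/- Let F : [0,∞) → ℂ and let 𝓕(z) = ∫_0^∞ e^{-zt} F(t) dt be its Laplace transform. Define K and M by the coupled integral equations K(t) = 1 − i∫_0^t e^{iω₀s} M(s) ds and M(t) = −i∫_0^t e^{-iω₀s} F(t−s) K(s) ds. Then the Laplace transform of K satisfies 𝒦(z) = 1/(z + 𝓕(z − iω₀)), provided all Laplace transforms converge for Re z sufficiently large. -/
open MeasureTheory Filter

/-- FTC for the complex exponential. -/
lemma int_exp (z : ℂ) (a b : ℝ) :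
    ∫ t in a..b, z * Complex.exp (-z * t) =
      Complex.exp (-z * a) - Complex.exp (-z * b) := by
  have hd : ∀ t ∈ Set.uIcc a b,
      HasDerivAt (fun t : ℝ => -Complex.exp (-z * t)) (z * Complex.exp (-z * t)) t := by
    intro t _
    have h1 : HasDerivAt (fun w : ℂ => Complex.exp (-z * w)) (-z * Complex.exp (-z * t)) (t : ℂ) := by
      simpa [mul_comm, Function.comp_def] using ((Complex.hasDerivAt_exp (-z * t)).comp (t : ℂ)
        ((hasDerivAt_id (t : ℂ)).const_mul (-z)))
    have h2 := h1.comp_ofReal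
    simpa using h2.fun_neg
  have hc : IntervalIntegrable (fun t : ℝ => z * Complex.exp (-z * t)) volume a b :=
    (Continuous.intervalIntegrable (by continuity) a b)
  have := intervalIntegral.integral_eq_sub_of_hasDerivAt hd hc
  rw [sub_eq_neg_add]; simpa using this

/-- If `e^{-ζt} g(t)` is integrable on `(0,∞)`, then `e^{-ξt} g(t)` is integrable on `(0,T]`. -/
lemma expIoc {g : ℝ → ℂ} {ζ : ℂ} (hg : IntegrableOn (fun t : ℝ => Complex.exp (-ζ * t) * g t) (Set.Ioi 0))
    (ξ : ℂ) (T : ℝ) :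
    IntegrableOn (fun t : ℝ => Complex.exp (-ξ * t) * g t) (Set.Ioc 0 T) := by
  have h1 : IntegrableOn (fun t : ℝ => Complex.exp (-ζ * t) * g t) (Set.Ioc 0 T) :=
    hg.mono_set Set.Ioc_subset_Ioi_self
  set C := Real.exp (max 0 ((ζ - ξ).re * T)) with hC
  have heq : ∀ t : ℝ, Complex.exp (-ξ * t) * g t
      = Complex.exp ((ζ - ξ) * t) * (Complex.exp (-ζ * t) * g t) := by
    intro t
    rw [← mul_assoc, ← Complex.exp_add]
    ring_nf
  have hmeas : AEStronglyMeasurable (fun t : ℝ => Complex.exp (-ξ * t) * g t)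
      (volume.restrict (Set.Ioc 0 T)) := by
    have : AEStronglyMeasurable (fun t : ℝ => Complex.exp ((ζ - ξ) * t) * (Complex.exp (-ζ * t) * g t))
        (volume.restrict (Set.Ioc 0 T)) :=
      (Continuous.aestronglyMeasurable (by continuity)).mul h1.aestronglyMeasurable
    exact this.congr (Filter.Eventually.of_forall fun t => (heq t).symm)
  refine Integrable.mono' (h1.norm.const_mul C) hmeas ?_
  filter_upwards [ae_restrict_mem measurableSet_Ioc] with t ht
  rw [heq t, norm_mul]
  gcongr
  rw [Complex.norm_exp]
  have : ((ζ - ξ) * (t : ℂ)).re = (ζ - ξ).re * t := by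
    simp [Complex.mul_re]
  rw [this, hC]
  apply Real.exp_le_exp.mpr
  rcases le_or_gt 0 ((ζ - ξ).re) with h | h
  · exact le_max_of_le_right (by nlinarith [ht.1.le, ht.2])
  · exact le_max_of_le_left (by nlinarith [ht.1.le])

/-- An integrable function on `(0,∞)` that tends to a limit at `+∞` must have limit `0`. -/
lemma limit_zero {f : ℝ → ℂ} (hf : IntegrableOn f (Set.Ioi 0)) {L : ℂ}
    (hL : Tendsto f atTop (nhds L)) : L = 0 := by
  by_contra hne
  set ε := ‖L‖ / 2 with hε
  have hLpos : 0 < ‖L‖ := norm_pos_iff.mpr hne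
  have hεpos : 0 < ε := by rw [hε]; linarith
  have hev : ∀ᶠ t in atTop, ε ≤ ‖f t‖ := by
    have := hL.norm.eventually (eventually_gt_nhds (show ‖L‖ / 2 < ‖L‖ by linarith))
    filter_upwards [this] with t ht
    exact ht.le
  rw [eventually_atTop] at hev
  obtain ⟨A, hA⟩ := hev
  set B := max A 1 with hB
  have hsub : Set.Ioi B ⊆ Set.Ioi (0:ℝ) := fun x hx => lt_trans (lt_of_lt_of_le one_pos (le_max_right A 1)) hx
  have hint : IntegrableOn (fun _ : ℝ => ε) (Set.Ioi B) := by
    refine Integrable.mono' ((hf.mono_set hsub).norm) aestronglyMeasurable_const ?_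
    filter_upwards [ae_restrict_mem measurableSet_Ioi] with t ht
    simpa [abs_of_pos hεpos] using hA t (le_trans (le_max_left A 1) ht.le)
  rw [integrableOn_const_iff] at hint
  rcases hint with h | h
  · exact absurd h (by simp [hεpos.ne'])
  · simp [Real.volume_Ioi] at h

/-- Fubini on the triangle `{0 < s < t ≤ T}`. -/
lemma triangle (φ h : ℝ → ℂ) (T : ℝ) (hφ : Continuous φ)
    (hh : IntegrableOn h (Set.Ioc 0 T)) :
    ∫ t in Set.Ioc 0 T, φ t * ∫ s in Set.Ioc 0 t, h s
      = ∫ s in Set.Ioc 0 T, (∫ t in Set.Ioc s T, φ t) * h s := by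
  set μ := volume.restrict (Set.Ioc (0:ℝ) T) with hμ
  set S : Set (ℝ × ℝ) := {p | p.2 < p.1} with hS
  have hSm : MeasurableSet S := measurableSet_lt measurable_snd measurable_fst
  set u : ℝ × ℝ → ℂ := S.indicator (fun p => φ p.1 * h p.2) with hu
  have hui : Integrable u (μ.prod μ) := by
    refine Integrable.indicator ?_ hSm
    exact Integrable.mul_prod (hφ.integrableOn_Ioc) hh
  have hswap : ∫ t, (∫ s, u (t, s) ∂μ) ∂μ = ∫ s, (∫ t, u (t, s) ∂μ) ∂μ :=
    integral_integral_swap (f := fun t s => u (t, s)) hui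
  have hleft : ∫ t, (∫ s, u (t, s) ∂μ) ∂μ = ∫ t in Set.Ioc 0 T, φ t * ∫ s in Set.Ioc 0 t, h s := by
    refine setIntegral_congr_fun measurableSet_Ioc fun t ht => ?_
    have h1 : (fun s => u (t, s)) = (Set.Iio t).indicator (fun s => φ t * h s) := by
      funext s
      by_cases hst : s < t
      · simp [hu, Set.indicator_apply, hS, hst]
      · simp [hu, Set.indicator_apply, hS, hst]
    rw [h1, integral_indicator measurableSet_Iio, hμ,
      Measure.restrict_restrict measurableSet_Iio]
    have h2 : Set.Iio t ∩ Set.Ioc 0 T = Set.Ioo 0 t := by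
      ext s
      simp only [Set.mem_inter_iff, Set.mem_Iio, Set.mem_Ioc, Set.mem_Ioo]
      exact ⟨fun ⟨h1', h2', _⟩ => ⟨h2', h1'⟩, fun ⟨h1', h2'⟩ => ⟨h2', h1', h2'.le.trans ht.2⟩⟩
    rw [h2, integral_const_mul, ← integral_Ioc_eq_integral_Ioo]
  have hright : ∫ s, (∫ t, u (t, s) ∂μ) ∂μ
      = ∫ s in Set.Ioc 0 T, (∫ t in Set.Ioc s T, φ t) * h s := by
    refine setIntegral_congr_fun measurableSet_Ioc fun s hs => ?_
    have h1 : (fun t => u (t, s)) = (Set.Ioi s).indicator (fun t => φ t * h s) := by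
      funext t
      by_cases hst : s < t
      · simp [hu, Set.indicator_apply, hS, hst]
      · simp [hu, Set.indicator_apply, hS, hst]
    rw [h1, integral_indicator measurableSet_Ioi, hμ,
      Measure.restrict_restrict measurableSet_Ioi]
    have h2 : Set.Ioi s ∩ Set.Ioc 0 T = Set.Ioc s T := by
      ext t
      simp only [Set.mem_inter_iff, Set.mem_Ioi, Set.mem_Ioc]
      exact ⟨fun ⟨h1', _, h3'⟩ => ⟨h1', h3'⟩, fun ⟨h1', h2'⟩ => ⟨h1', hs.1.trans h1', h2'⟩⟩
    rw [h2, integral_mul_const]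
  rw [← hleft, hswap, hright]

/-- The Laplace transform `𝓕(z) = ∫_0^∞ e^{-zt} F(t) dt`. -/
noncomputable def laplaceTransform (F : ℝ → ℂ) (z : ℂ) : ℂ :=
  ∫ t in Set.Ioi (0 : ℝ), Complex.exp (-z * t) * F t

/-- Friedrichs–Lee model: if `K(t) = 1 − i∫_0^t e^{iω₀s} M(s) ds` and
`M(t) = −i∫_0^t e^{-iω₀s} F(t−s) K(s) ds`, then the Laplace transform of `K` satisfies
`𝒦(z) = 1/(z + 𝓕(z − iω₀))`, provided all Laplace transforms converge for `Re z` large. -/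
theorem stmt_4 (F K M : ℝ → ℂ) (ω₀ : ℝ) (c : ℝ)
    (hK : ∀ t : ℝ, K t =
      1 - Complex.I * ∫ s in (0 : ℝ)..t, Complex.exp (Complex.I * ω₀ * s) * M s)
    (hM : ∀ t : ℝ, M t =
      -Complex.I * ∫ s in (0 : ℝ)..t, Complex.exp (-Complex.I * ω₀ * s) * F (t - s) * K s)
    (hF : ∀ z : ℂ, c < z.re →
      IntegrableOn (fun t : ℝ => Complex.exp (-z * t) * F t) (Set.Ioi 0))
    (hKint : ∀ z : ℂ, c < z.re →
      IntegrableOn (fun t : ℝ => Complex.exp (-z * t) * K t) (Set.Ioi 0))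
    (hMint : ∀ z : ℂ, c < z.re →
      IntegrableOn (fun t : ℝ => Complex.exp (-z * t) * M t) (Set.Ioi 0)) :
    ∀ z : ℂ, c < z.re →
      laplaceTransform K z = 1 / (z + laplaceTransform F (z - Complex.I * ω₀)) := by
  intro z hz
  set w : ℂ := z - Complex.I * ω₀ with hwdef
  have hwre : w.re = z.re := by simp [hwdef]
  have hw : c < w.re := by rw [hwre]; exact hz
  have hKi := hKint z hz
  have hMi := hMint w hw
  have hFi := hF w hw
  set LK : ℂ := laplaceTransform K z with hLK
  set LF : ℂ := laplaceTransform F w with hLF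
  set LM : ℂ := ∫ t in Set.Ioi (0:ℝ), Complex.exp (-w * t) * M t with hLM
  set h : ℝ → ℂ := fun s : ℝ => Complex.exp (Complex.I * ω₀ * s) * M s with hh
  -- pointwise exponential identity
  have hexp : ∀ s : ℝ, Complex.exp (-z * s) * Complex.exp (Complex.I * ω₀ * s)
      = Complex.exp (-w * s) := by
    intro s
    rw [← Complex.exp_add]
    congr 1
    rw [hwdef]; ring
  -- Step A : the finite-time identity
  have key : ∀ T : ℝ, 0 ≤ T →
      Complex.exp (-z * T) * K T
        = 1 - Complex.I * (∫ s in Set.Ioc (0:ℝ) T, Complex.exp (-w * s) * M s)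
          - z * ∫ t in Set.Ioc (0:ℝ) T, Complex.exp (-z * t) * K t := by
    intro T hT
    have hhInt : IntegrableOn h (Set.Ioc 0 T) := by
      have := expIoc hMi (-(Complex.I * ω₀)) T
      simpa [hh] using this
    have hKIoc : IntegrableOn (fun t : ℝ => Complex.exp (-z * t) * K t) (Set.Ioc 0 T) :=
      hKi.mono_set Set.Ioc_subset_Ioi_self
    have hwM : IntegrableOn (fun t : ℝ => Complex.exp (-w * t) * M t) (Set.Ioc 0 T) :=
      hMi.mono_set Set.Ioc_subset_Ioi_self
    set A : ℂ := ∫ t in Set.Ioc (0:ℝ) T, Complex.exp (-z * t) * K t with hA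
    set E1 : ℂ := ∫ t in Set.Ioc (0:ℝ) T, Complex.exp (-z * t) with hE1
    set J : ℂ := ∫ t in Set.Ioc (0:ℝ) T, Complex.exp (-z * t) * ∫ s in Set.Ioc (0:ℝ) t, h s
      with hJ
    set P : ℂ := ∫ s in Set.Ioc (0:ℝ) T, Complex.exp (-w * s) * M s with hP
    set Q : ℂ := ∫ s in Set.Ioc (0:ℝ) T, h s with hQ
    -- c4 : I * Q = 1 - K T
    have c4 : Complex.I * Q = 1 - K T := by
      have := hK T
      rw [intervalIntegral.integral_of_le hT] at this
      rw [hQ, hh]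
      linear_combination this
    -- c3 : z * E1 = 1 - exp (-z T)
    have c3 : z * E1 = 1 - Complex.exp (-z * T) := by
      have := int_exp z 0 T
      rw [intervalIntegral.integral_of_le hT] at this
      rw [hE1, ← integral_const_mul]
      simpa using this
    -- c1 : I * J = E1 - A
    have c1 : Complex.I * J = E1 - A := by
      rw [hJ, ← integral_const_mul, hE1, hA, ← integral_sub ((by fun_prop : Continuous fun t : ℝ => Complex.exp (-z * t)).integrableOn_Ioc) hKIoc]
      refine setIntegral_congr_fun measurableSet_Ioc fun t ht => ?_
      have hKt := hK t
      rw [intervalIntegral.integral_of_le ht.1.le] at hKt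
      rw [hh]
      calc Complex.I * (Complex.exp (-z * t) * ∫ s in Set.Ioc (0:ℝ) t,
              Complex.exp (Complex.I * ω₀ * s) * M s)
          = Complex.exp (-z * t) * (Complex.I * ∫ s in Set.Ioc (0:ℝ) t,
              Complex.exp (Complex.I * ω₀ * s) * M s) := by ring
        _ = Complex.exp (-z * t) - Complex.exp (-z * t) * K t := by
            rw [show Complex.I * ∫ s in Set.Ioc (0:ℝ) t,
                Complex.exp (Complex.I * ω₀ * s) * M s = 1 - K t by linear_combination hKt]
            ring
    -- c2 : z * J = P - exp(-z T) * Q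
    have c2 : z * J = P - Complex.exp (-z * T) * Q := by
      have htri := triangle (fun t : ℝ => z * Complex.exp (-z * t)) h T (by fun_prop) hhInt
      have hJ2 : z * J = ∫ t in Set.Ioc (0:ℝ) T,
          (z * Complex.exp (-z * t)) * ∫ s in Set.Ioc (0:ℝ) t, h s := by
        rw [hJ, ← integral_const_mul]
        refine setIntegral_congr_fun measurableSet_Ioc fun t ht => ?_
        ring
      rw [hJ2, htri]
      have : ∀ s ∈ Set.Ioc (0:ℝ) T,
          (∫ t in Set.Ioc s T, z * Complex.exp (-z * t)) * h s
            = Complex.exp (-w * s) * M s - Complex.exp (-z * T) * h s := by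
        intro s hs
        have := int_exp z s T
        rw [intervalIntegral.integral_of_le hs.2] at this
        rw [this, hh, sub_mul, ← mul_assoc, hexp s]
      rw [setIntegral_congr_fun measurableSet_Ioc this,
        integral_sub hwM (hhInt.const_mul _), hP, hQ, integral_const_mul]
    linear_combination c3 - Complex.I * c2 + z * c1 + Complex.exp (-z * T) * c4
  -- Step B : take the limit T → ∞
  have l1 := MeasureTheory.intervalIntegral_tendsto_integral_Ioi 0 hKi tendsto_id
  have l2 := MeasureTheory.intervalIntegral_tendsto_integral_Ioi 0 hMi tendsto_id
  have l3 : Tendsto (fun T : ℝ => Complex.exp (-z * T) * K T) atTop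
      (nhds (1 - Complex.I * LM - z * LK)) := by
    refine Filter.Tendsto.congr' ?_
      ((tendsto_const_nhds.sub (l2.const_mul Complex.I)).sub (l1.const_mul z))
    filter_upwards [eventually_ge_atTop (0:ℝ)] with T hT
    simp only [id_eq]
    rw [intervalIntegral.integral_of_le hT, intervalIntegral.integral_of_le hT]
    exact (key T hT).symm
  have hzero : 1 - Complex.I * LM - z * LK = 0 := limit_zero hKi l3
  -- Step C : convolution identity
  have hpc := integral_posConvolution (μ := volume) (ν := volume) hKi hFi
    (ContinuousLinearMap.mul ℝ ℂ)
  simp only [ContinuousLinearMap.mul_apply'] at hpc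
  have conv : LM = -Complex.I * (LK * LF) := by
    have step : LM = ∫ x in Set.Ioi (0:ℝ), -Complex.I * ∫ t in (0:ℝ)..x,
        (Complex.exp (-z * t) * K t) * (Complex.exp (-w * ((x - t : ℝ) : ℂ)) * F (x - t)) := by
      rw [hLM]
      refine setIntegral_congr_fun measurableSet_Ioi fun x hx => ?_
      rw [hM x, show Complex.exp (-w * x) * (-Complex.I * ∫ s in (0:ℝ)..x,
          Complex.exp (-Complex.I * ω₀ * s) * F (x - s) * K s)
          = -Complex.I * (Complex.exp (-w * x) * ∫ s in (0:ℝ)..x,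
          Complex.exp (-Complex.I * ω₀ * s) * F (x - s) * K s) from by ring]
      congr 1
      rw [← intervalIntegral.integral_const_mul]
      refine intervalIntegral.integral_congr fun s hs => ?_
      have harg : Complex.exp (-w * x) * Complex.exp (-Complex.I * ω₀ * s)
          = Complex.exp (-z * s) * Complex.exp (-w * ((x - s : ℝ) : ℂ)) := by
        rw [← Complex.exp_add, ← Complex.exp_add]
        congr 1
        rw [hwdef]; push_cast; ring
      calc Complex.exp (-w * x) * (Complex.exp (-Complex.I * ω₀ * s) * F (x - s) * K s)
          = (Complex.exp (-w * x) * Complex.exp (-Complex.I * ω₀ * s)) * F (x - s) * K s := by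
            ring
        _ = (Complex.exp (-z * s) * K s) * (Complex.exp (-w * ((x - s : ℝ) : ℂ)) * F (x - s)) := by
            rw [harg]; ring
    rw [step, integral_const_mul]
    congr 1
  -- Final algebra
  have hKLF : LK * (z + LF) = 1 := by
    linear_combination -hzero - Complex.I * conv + (LK * LF) * Complex.I_sq
  have hne : z + LF ≠ 0 := by
    intro hcon
    rw [hcon, mul_zero] at hKLF
    exact one_ne_zero hKLF.symm
  rw [eq_div_iff hne]
  exact hKLF
end

section
/- Let H̃(t) = A(t)⊗σ⁺ + A'(t)⊗σ⁻ + i b 𝟙_F ⊗ |1⟩⟨1| act on F ⊗ ℂ², where A(t), A'(t) are operators on F commuting with σ^±, and b ∈ ℂ. Then ⟨1| H̃(t₁)⋯H̃(t_n) |1⟩ = ∑_{k=0}^{n} (ib)^k ∑ A(t_{p₁})A'(t_{p₁+1}) ⋯ A(t_{p_{(n−k)/2}})A'(t_{p_{(n−k)/2}+1}), where the inner sum runs over all index sequences 1 ≤ p₁, p₁+1 < p₂, …, p_{(n−k)/2−1}+1 < p_{(n−k)/2} ≤ n−1 selecting (n−k)/2 disjoint pairs of adjacent positions among {1,…,n}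 (the sum is empty unless n−k is even). -/
set_option linter.unusedSectionVars false
set_option maxHeartbeats 1000000

section Aux
variable {R : Type*} [Ring R] [Algebra ℂ R]

/-- The recursion satisfied by `⟨1|H̃(t_s)⋯H̃(t_{s+n-1})|1⟩`. -/
def Gf (c : ℂ) (f g : ℕ → R) : ℕ → ℕ → R
  | _, 0 => 1
  | _, 1 => c • 1
  | s, n+2 => c • Gf c f g (s+1) (n+1) + f s * g (s+1) * Gf c f g (s+2) n

/-- Sum over selections of `m` disjoint adjacent pairs among `n` positions (offset `s`). -/
def Sv (f g : ℕ → R) (s n m : ℕ) : R :=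
  ∑ p ∈ Finset.univ.filter
      (fun p : Fin m → Fin n =>
        (∀ r, (p r : ℕ) + 1 < n) ∧
        ∀ r t : Fin m, r < t → (p r : ℕ) + 1 < (p t : ℕ)),
    (List.ofFn fun r : Fin m => f (s + (p r : ℕ)) * g (s + (p r : ℕ) + 1)).prod

lemma Sv_m0 (f g : ℕ → R) (s n : ℕ) : Sv f g s n 0 = 1 := by
  simp [Sv]

lemma Sv_big (f g : ℕ → R) (s n m : ℕ) (h : n < 2 * m) : Sv f g s n m = 0 := by
  rw [Sv]
  refine Finset.sum_eq_zero fun p hp => ?_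
  exfalso
  rw [Finset.mem_filter] at hp
  obtain ⟨-, hb, hg⟩ := hp
  have key : ∀ j (hj : j < m), 2 * j ≤ (p ⟨j, hj⟩ : ℕ) := by
    intro j
    induction j with
    | zero => intro _; exact Nat.zero_le _
    | succ j ih =>
      intro hj
      have h1 := ih (by omega)
      have h2 := hg ⟨j, by omega⟩ ⟨j+1, hj⟩ (by simp [Fin.lt_def])
      omega
  have hm : 0 < m := by omega
  have k1 := key (m-1) (by omega)
  have k2 := hb ⟨m-1, by omega⟩
  omega

lemma head_facts {n m : ℕ} {p : Fin (m+1) → Fin (n+2)}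
    (hg : ∀ r t : Fin (m+1), r < t → (p r : ℕ) + 1 < (p t : ℕ))
    (hnp : ¬ ∀ r, 0 < (p r : ℕ)) :
    (p 0 : ℕ) = 0 ∧ ∀ r : Fin m, 2 ≤ (p r.succ : ℕ) := by
  push_neg at hnp
  obtain ⟨r, hr⟩ := hnp
  have h0 : (p 0 : ℕ) = 0 := by
    by_cases h : r = 0
    · subst h; omega
    · have := hg 0 r (Fin.pos_iff_ne_zero.2 h)
      omega
  refine ⟨h0, fun t => ?_⟩
  have := hg 0 t.succ (Fin.succ_pos t)
  omega

lemma Sv_split_succ (f g : ℕ → R) (s n m : ℕ) :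
    Sv f g s (n+2) (m+1) = Sv f g (s+1) (n+1) (m+1) + f s * g (s+1) * Sv f g (s+2) n m := by
  classical
  rw [Sv]
  rw [← Finset.sum_filter_add_sum_filter_not _ (fun p : Fin (m+1) → Fin (n+2) => ∀ r, 0 < (p r : ℕ))]
  congr 1
  · -- all starts positive : shift down by one
    rw [Sv, Finset.filter_filter]
    refine Finset.sum_bij'
      (i := fun p _ => fun r : Fin (m+1) => (⟨(p r : ℕ) - 1, by have := (p r).2; omega⟩ : Fin (n+1)))
      (j := fun p _ => fun r : Fin (m+1) => (⟨(p r : ℕ) + 1, by have := (p r).2; omega⟩ : Fin (n+2)))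
      ?_ ?_ ?_ ?_ ?_
    · intro p hp
      simp only [Finset.mem_filter, Finset.mem_univ, true_and] at hp ⊢
      obtain ⟨⟨hb, hg⟩, hpos⟩ := hp
      constructor
      · intro r
        show ((p r : ℕ) - 1) + 1 < n + 1
        have := hb r; have := hpos r; omega
      · intro r t hrt
        show ((p r : ℕ) - 1) + 1 < (p t : ℕ) - 1
        have := hg r t hrt; have := hpos r; have := hpos t; omega
    · intro p hp
      simp only [Finset.mem_filter, Finset.mem_univ, true_and] at hp ⊢
      obtain ⟨hb, hg⟩ := hp
      refine ⟨⟨fun r => ?_, fun r t hrt => ?_⟩, fun r => ?_⟩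
      · show ((p r : ℕ) + 1) + 1 < n + 2
        have := hb r; omega
      · show ((p r : ℕ) + 1) + 1 < (p t : ℕ) + 1
        have := hg r t hrt; omega
      · show 0 < (p r : ℕ) + 1
        omega
    · intro p hp
      simp only [Finset.mem_filter, Finset.mem_univ, true_and] at hp
      obtain ⟨-, hpos⟩ := hp
      funext r
      exact Fin.ext (by have := hpos r; simp; omega)
    · intro p hp
      funext r
      exact Fin.ext (by simp)
    · intro p hp
      simp only [Finset.mem_filter, Finset.mem_univ, true_and] at hp
      obtain ⟨-, hpos⟩ := hp
      congr 1
      apply congrArg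
      funext r
      have := hpos r
      have e : (s+1) + ((p r : ℕ) - 1) = s + (p r : ℕ) := by omega
      rw [e]
  · -- p 0 = 0 : peel off the first pair
    rw [Sv, Finset.filter_filter, Finset.mul_sum]
    refine Finset.sum_bij'
      (i := fun p hp => fun r : Fin m =>
        (⟨(p r.succ : ℕ) - 2, by
          simp only [Finset.mem_filter, Finset.mem_univ, true_and] at hp
          obtain ⟨⟨hb, hg⟩, hnp⟩ := hp
          obtain ⟨-, h2⟩ := head_facts hg hnp
          have := hb r.succ; have := h2 r; omega⟩ : Fin n))
      (j := fun p _ => Fin.cases (⟨0, by omega⟩ : Fin (n+2))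
          (fun r : Fin m => (⟨(p r : ℕ) + 2, by have := (p r).2; omega⟩ : Fin (n+2))))
      ?_ ?_ ?_ ?_ ?_
    · intro p hp
      simp only [Finset.mem_filter, Finset.mem_univ, true_and] at hp ⊢
      obtain ⟨⟨hb, hg⟩, hnp⟩ := hp
      obtain ⟨h0, h2⟩ := head_facts hg hnp
      constructor
      · intro r
        show ((p r.succ : ℕ) - 2) + 1 < n
        have := hb r.succ; have := h2 r; omega
      · intro r t hrt
        show ((p r.succ : ℕ) - 2) + 1 < (p t.succ : ℕ) - 2
        have := hg r.succ t.succ (Fin.succ_lt_succ_iff.2 hrt)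
        have := h2 r; have := h2 t; omega
    · intro p hp
      simp only [Finset.mem_filter, Finset.mem_univ, true_and] at hp ⊢
      obtain ⟨hb, hg⟩ := hp
      refine ⟨⟨fun r => ?_, fun r t hrt => ?_⟩, ?_⟩
      · cases r using Fin.cases with
        | zero => simp
        | succ r =>
          simp only [Fin.cases_succ]
          show ((p r : ℕ) + 2) + 1 < n + 2
          have := hb r; omega
      · cases t using Fin.cases with
        | zero => exact absurd hrt (by simp)
        | succ t =>
          cases r using Fin.cases with
          | zero =>
            simp only [Fin.cases_zero, Fin.cases_succ]
            show (0 : ℕ) + 1 < (p t : ℕ) + 2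
            omega
          | succ r =>
            simp only [Fin.cases_succ]
            show ((p r : ℕ) + 2) + 1 < (p t : ℕ) + 2
            have := hg r t (by exact Fin.succ_lt_succ_iff.1 hrt)
            omega
      · intro hall
        have := hall 0
        simp at this
    · intro p hp
      simp only [Finset.mem_filter, Finset.mem_univ, true_and] at hp
      obtain ⟨⟨hb, hg⟩, hnp⟩ := hp
      obtain ⟨h0, h2⟩ := head_facts hg hnp
      funext r
      cases r using Fin.cases with
      | zero => simp only [Fin.cases_zero]; exact (Fin.ext h0.symm)
      | succ r =>
        simp only [Fin.cases_succ]
        exact Fin.ext (by have := h2 r; simp; omega)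
    · intro p hp
      funext r
      simp only [Fin.cases_succ]
      exact Fin.ext (by simp)
    · intro p hp
      simp only [Finset.mem_filter, Finset.mem_univ, true_and] at hp
      obtain ⟨⟨hb, hg⟩, hnp⟩ := hp
      obtain ⟨h0, h2⟩ := head_facts hg hnp
      rw [List.ofFn_succ, List.prod_cons]; simp only [h0]
      have e : (fun r : Fin m => f (s + (p r.succ : ℕ)) * g (s + (p r.succ : ℕ) + 1))
          = fun r : Fin m => f ((s+2) + ((p r.succ : ℕ) - 2)) * g ((s+2) + ((p r.succ : ℕ) - 2) + 1) := by
        funext r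
        have := h2 r
        have e1 : (s+2) + ((p r.succ : ℕ) - 2) = s + (p r.succ : ℕ) := by omega
        rw [e1]
      simp only [Nat.add_zero]
      rw [show (fun i : Fin m => f (s + (p i.succ : ℕ)) * g (s + (p i.succ : ℕ) + 1)) = _ from e]

def Tv (c : ℂ) (f g : ℕ → R) (s n : ℕ) : R :=
  ∑ k ∈ Finset.range (n+1),
    if (n - k) % 2 = 0 then c ^ k • Sv f g s n ((n - k) / 2) else 0

lemma Tv_zero (c : ℂ) (f g : ℕ → R) (s : ℕ) : Tv c f g s 0 = 1 := by
  simp [Tv, Sv_m0]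

lemma Tv_one (c : ℂ) (f g : ℕ → R) (s : ℕ) : Tv c f g s 1 = c • 1 := by
  rw [Tv]
  rw [Finset.sum_range_succ, Finset.sum_range_one]
  norm_num [Sv_m0]

lemma Tv_rec (c : ℂ) (f g : ℕ → R) (s n : ℕ) :
    Tv c f g s (n+2) = c • Tv c f g (s+1) (n+1) + f s * g (s+1) * Tv c f g (s+2) n := by
  have hterm : ∀ k ∈ Finset.range (n+3),
      (if (n+2-k) % 2 = 0 then c ^ k • Sv f g s (n+2) ((n+2-k)/2) else 0)
      = (if (n+2-k) % 2 = 0 then c ^ k • Sv f g (s+1) (n+1) ((n+2-k)/2) else 0)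
        + (if k ≤ n ∧ (n-k) % 2 = 0 then
            c ^ k • (f s * g (s+1) * Sv f g (s+2) n ((n-k)/2)) else 0) := by
    intro k hk
    rw [Finset.mem_range] at hk
    by_cases h1 : (n+2-k) % 2 = 0
    · by_cases h2 : k ≤ n
      · have h3 : (n-k) % 2 = 0 := by omega
        have e1 : (n+2-k)/2 = (n-k)/2 + 1 := by omega
        rw [if_pos h1, if_pos h1, if_pos ⟨h2, h3⟩, e1, Sv_split_succ, smul_add]
      · have hk2 : k = n + 2 := by omega
        subst hk2
        rw [if_pos h1, if_pos h1, if_neg (by omega)]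
        simp [Sv_m0]
    · have h4 : ¬(k ≤ n ∧ (n-k) % 2 = 0) := by rintro ⟨h2, h3⟩; omega
      rw [if_neg h1, if_neg h1, if_neg h4, add_zero]
  rw [Tv, Finset.sum_congr rfl hterm, Finset.sum_add_distrib]
  congr 1
  · -- first sum = c • Tv (s+1) (n+1)
    rw [show n + 2 + 1 = (n + 2) + 1 from rfl, Finset.sum_range_succ']
    have hz : (if (n+2-0) % 2 = 0 then c ^ 0 • Sv f g (s+1) (n+1) ((n+2-0)/2) else 0) = 0 := by
      by_cases h : (n+2) % 2 = 0
      · simp only [Nat.sub_zero, if_pos h]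
        rw [Sv_big f g (s+1) (n+1) ((n+2)/2) (by omega), smul_zero]
      · rw [Nat.sub_zero, if_neg h]
    rw [hz, add_zero, Tv, Finset.smul_sum]
    refine Finset.sum_congr rfl fun k hk => ?_
    have e : n + 2 - (k+1) = n + 1 - k := by omega
    rw [e]
    by_cases h : (n+1-k) % 2 = 0
    · rw [if_pos h, if_pos h, smul_smul, pow_succ']
    · rw [if_neg h, if_neg h, smul_zero]
  · -- second sum = f s * g (s+1) * Tv (s+2) n
    rw [Tv, Finset.mul_sum]
    rw [← Finset.sum_subset (Finset.range_subset_range.2 (by omega : n + 1 ≤ n + 3))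
      (fun k _ hk => by rw [Finset.mem_range] at hk; rw [if_neg (by omega)])]
    refine Finset.sum_congr rfl fun k hk => ?_
    rw [Finset.mem_range] at hk
    by_cases h : (n-k) % 2 = 0
    · rw [if_pos ⟨by omega, h⟩, if_pos h, mul_smul_comm]
    · rw [if_neg (by omega), if_neg h, mul_zero]

lemma Tv_eq_Gf (c : ℂ) (f g : ℕ → R) : ∀ n s, Tv c f g s n = Gf c f g s n := by
  intro n
  induction n using Nat.strong_induction_on with
  | _ n ih =>
    match n with
    | 0 => intro s; rw [Tv_zero, Gf]
    | 1 => intro s; rw [Tv_one, Gf]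
    | (n+2) =>
      intro s
      rw [Tv_rec, ih (n+1) (by omega), ih n (by omega), Gf]

lemma mat_entries (c : ℂ) (f g : ℕ → R) :
    ∀ n s, (((List.ofFn fun q : Fin n =>
        Matrix.of ![![0, g (s + (q : ℕ))], ![f (s + (q : ℕ)), c • (1 : R)]]).prod) 1 1
          = Gf c f g s n)
      ∧ (((List.ofFn fun q : Fin n =>
        Matrix.of ![![0, g (s + (q : ℕ))], ![f (s + (q : ℕ)), c • (1 : R)]]).prod) 0 1
          = if n = 0 then 0 else g s * Gf c f g (s+1) (n-1)) := by
  intro n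
  induction n with
  | zero =>
    intro s
    constructor
    · rw [Gf]; simp [Matrix.one_apply_eq]
    · simp
  | succ n ih =>
    intro s
    have e : (List.ofFn fun q : Fin (n+1) =>
          Matrix.of ![![(0 : R), g (s + (q : ℕ))], ![f (s + (q : ℕ)), c • 1]])
        = Matrix.of ![![(0 : R), g s], ![f s, c • 1]] ::
          List.ofFn (fun q : Fin n =>
            Matrix.of ![![(0 : R), g ((s+1) + (q : ℕ))], ![f ((s+1) + (q : ℕ)), c • 1]]) := by
      rw [List.ofFn_succ]
      congr 1
      refine congrArg List.ofFn (funext fun q => ?_)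
      simp only [Fin.val_succ, show s + ((q : ℕ) + 1) = s + 1 + (q : ℕ) from by omega]
    rw [e, List.prod_cons]
    have h1 := (ih (s+1)).1
    have h2 := (ih (s+1)).2
    constructor
    · rw [Matrix.mul_apply, Fin.sum_univ_two]
      simp only [Matrix.of_apply, Matrix.cons_val', Matrix.cons_val_zero, Matrix.cons_val_one,
        Matrix.head_cons, Matrix.empty_val', Matrix.cons_val_fin_one, Matrix.head_fin_const]
      rw [h1, h2]
      match n with
      | 0 =>
        norm_num [Gf, smul_mul_assoc]
      | (m+1) =>
        rw [if_neg (by omega)]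
        simp only [Nat.add_sub_cancel]
        rw [smul_mul_assoc, one_mul]
        rw [show Gf c f g s (m+2) = c • Gf c f g (s+1) (m+1) + f s * g (s+1) * Gf c f g (s+2) m
          from rfl]
        rw [← mul_assoc, add_comm]
    · rw [Matrix.mul_apply, Fin.sum_univ_two]
      simp only [Matrix.of_apply, Matrix.cons_val', Matrix.cons_val_zero, Matrix.cons_val_one,
        Matrix.head_cons, Matrix.empty_val', Matrix.cons_val_fin_one, Matrix.head_fin_const]
      rw [h1, if_neg (by omega)]
      simp
end Aux


/-- Proposition 1. Represent `H̃(t) = A(t)⊗σ⁺ + A'(t)⊗σ⁻ + ib·𝟙_F⊗|1⟩⟨1|` as a 2×2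
matrix over the field-operator algebra `R` (entry `(1,0)` is `A(t)`, entry `(0,1)` is
`A'(t)`, entry `(1,1)` is `ib·1`).  Then the partial matrix element
`⟨1| H̃(t₁)⋯H̃(t_n) |1⟩` equals
`∑_{k=0}^{n} (ib)^k ∑_p A(t_{p₁})A'(t_{p₁+1}) ⋯ A(t_{p_m})A'(t_{p_m+1})`,
where `m = (n−k)/2` (the inner sum being empty unless `n−k` is even) and the inner sum
runs over all choices of `m` disjoint pairs of adjacent positions
`(p_r, p_r + 1)` among `{0,…,n−1}` (0-indexed, with `p_r + 1 < p_{r+1}`). -/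
theorem stmt_10 {R : Type*} [Ring R] [Algebra ℂ R]
    (A A' : ℝ → R) (b : ℂ) (n : ℕ) (τ : ℕ → ℝ) :
    ((List.ofFn fun q : Fin n =>
        Matrix.of ![![0, A' (τ q)], ![A (τ q), (Complex.I * b) • (1 : R)]]).prod) 1 1
      = ∑ k ∈ Finset.range (n + 1),
          if (n - k) % 2 = 0 then
            (Complex.I * b) ^ k •
              ∑ p ∈ Finset.univ.filter
                  (fun p : Fin ((n - k) / 2) → Fin n =>
                    (∀ r, (p r : ℕ) + 1 < n) ∧
                    ∀ r s : Fin ((n - k) / 2), r < s → (p r : ℕ) + 1 < (p s : ℕ)),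
                (List.ofFn fun r : Fin ((n - k) / 2) =>
                  A (τ (p r : ℕ)) * A' (τ ((p r : ℕ) + 1))).prod
          else 0 := by
  have h1 := (mat_entries (Complex.I * b) (fun i => A (τ i)) (fun i => A' (τ i)) n 0).1
  have h2 := Tv_eq_Gf (Complex.I * b) (fun i => A (τ i)) (fun i => A' (τ i)) n 0
  simp only [zero_add] at h1
  rw [h1, ← h2, Tv]
  refine Finset.sum_congr rfl fun k _ => ?_
  by_cases h : (n - k) % 2 = 0
  · rw [if_pos h, if_pos h, Sv]
    refine congrArg _ (Finset.sum_congr rfl fun p _ => ?_)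
    simp only [zero_add]
  · rw [if_neg h, if_neg h]
end
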